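/- Birch's theorem: Let H ⊆ ℝ^m be a linear subspace and α, p ∈ ℝ^m_{>0}. Then the relative interior of the polyhedron P = (p + H) ∩ ℝ^m_{≥0} intersects the set {α * θ^w : θ ∈ ℝ_{>0}, w ∈ H^⊥} in exactly one point, where α * θ^w denotes the vector with coordinates α_i θ^{w_i}. -/

import Mathlib

open Real Finset RealInnerProductSpace


lemma birch_termwise (a b t : ℝ) (ha : 0 < a) (hb : 0 < b) :
    b * |t| - 4 * b ^ 2 / a ≤ a * Real.exp t - b * t := by
  rcases le_or_gt t 0 with ht | ht
  · rw [abs_of_nonpos ht]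
    have h1 : 0 < Real.exp t := Real.exp_pos t
    have h2 : 0 < 4 * b ^ 2 / a := by positivity
    nlinarith
  · rw [abs_of_pos ht]
    have h1 : (1 + t / 2) ^ 2 ≤ Real.exp t := by
      have h0 := Real.add_one_le_exp (t / 2)
      have h2 : Real.exp (t/2) * Real.exp (t/2) = Real.exp t := by
        rw [← Real.exp_add]; ring_nf
      nlinarith [Real.exp_pos (t/2)]
    have h3 : 4 * b ^ 2 / a * a = 4 * b ^ 2 := by field_simp
    nlinarith [mul_le_mul_of_nonneg_left h1 ha.le, sq_nonneg (a * t - 4 * b), mul_pos ha ht]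

-- existence of minimizer
lemma birch_exists_min {m : ℕ} (H : Submodule ℝ (EuclideanSpace ℝ (Fin m)))
    (α p : EuclideanSpace ℝ (Fin m)) (hα : ∀ i, 0 < α i) (hp : ∀ i, 0 < p i) :
    ∃ v0 ∈ Hᗮ, ∀ u ∈ Hᗮ,
      (∑ i, (α i * Real.exp (v0 i) - p i * v0 i)) ≤ ∑ i, (α i * Real.exp (u i) - p i * u i) := by
  classical
  set g : EuclideanSpace ℝ (Fin m) → ℝ :=
    fun v => ∑ i, (α i * Real.exp (v i) - p i * v i) with hg
  have hgc : Continuous g := by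
    apply continuous_finset_sum
    intro i _
    have hco : Continuous fun v : EuclideanSpace ℝ (Fin m) => v i :=
      (EuclideanSpace.proj i).continuous
    fun_prop
  set K : ℝ := ∑ j, 4 * (p j) ^ 2 / α j with hK
  have hKnn : 0 ≤ K := Finset.sum_nonneg fun j _ => div_nonneg (by positivity) (hα j).le
  -- coordinatewise lower bound
  have hlb : ∀ (v : EuclideanSpace ℝ (Fin m)) (i : Fin m), p i * |v i| - K ≤ g v := by
    intro v i
    have h1 : ∀ j ∈ Finset.univ, (0:ℝ) ≤ (α j * Real.exp (v j) - p j * v j) + 4 * (p j)^2 / α j := by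
      intro j _
      have := birch_termwise (α j) (p j) (v j) (hα j) (hp j)
      have : (0:ℝ) ≤ p j * |v j| := mul_nonneg (hp j).le (abs_nonneg _)
      nlinarith [birch_termwise (α j) (p j) (v j) (hα j) (hp j)]
    have h2 : p i * |v i| ≤ (α i * Real.exp (v i) - p i * v i) + 4 * (p i)^2 / α i := by
      linarith [birch_termwise (α i) (p i) (v i) (hα i) (hp i)]
    have h3 := Finset.single_le_sum h1 (Finset.mem_univ i)
    have h4 : ∑ j, ((α j * Real.exp (v j) - p j * v j) + 4 * (p j)^2 / α j) = g v + K := by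
      rw [Finset.sum_add_distrib]
    linarith
  -- the sublevel set
  set S : Set (EuclideanSpace ℝ (Fin m)) := {v | v ∈ Hᗮ ∧ g v ≤ g 0} with hS
  have h0S : (0 : EuclideanSpace ℝ (Fin m)) ∈ S := ⟨Submodule.zero_mem _, le_refl _⟩
  have hSclosed : IsClosed S := by
    have h1 : IsClosed (Hᗮ : Set (EuclideanSpace ℝ (Fin m))) :=
      Submodule.closed_of_finiteDimensional _
    exact h1.inter (isClosed_Iic.preimage hgc)
  have hSbdd : Bornology.IsBounded S := by
    rw [isBounded_iff_forall_norm_le]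
    refine ⟨Real.sqrt (∑ i, ((g 0 + K) / p i) ^ 2), ?_⟩
    intro v hv
    have hnorm : ‖v‖ = Real.sqrt (∑ i, v i ^ 2) := by
      rw [EuclideanSpace.norm_eq]
      congr 1
      exact Finset.sum_congr rfl fun i _ => sq_abs _
    rw [hnorm]
    apply Real.sqrt_le_sqrt
    apply Finset.sum_le_sum
    intro i _
    have hvi : |v i| ≤ (g 0 + K) / p i := by
      rw [le_div_iff₀ (hp i)]
      have := hlb v i
      have := hv.2
      linarith [mul_comm (|v i|) (p i)]
    calc v i ^ 2 = |v i| ^ 2 := (sq_abs _).symm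
      _ ≤ ((g 0 + K) / p i) ^ 2 := by
          apply pow_le_pow_left₀ (abs_nonneg _) hvi
  have hScompact : IsCompact S := Metric.isCompact_of_isClosed_isBounded hSclosed hSbdd
  obtain ⟨v0, hv0S, hv0min⟩ := hScompact.exists_isMinOn ⟨0, h0S⟩ hgc.continuousOn
  refine ⟨v0, hv0S.1, ?_⟩
  intro u hu
  rcases le_or_gt (g u) (g 0) with h | h
  · exact hv0min ⟨hu, h⟩
  · exact le_trans (hv0min h0S) h.le


lemma birch_deriv {m : ℕ} (H : Submodule ℝ (EuclideanSpace ℝ (Fin m)))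
    (α p : EuclideanSpace ℝ (Fin m)) (v0 : EuclideanSpace ℝ (Fin m)) (hv0 : v0 ∈ Hᗮ)
    (hmin : ∀ u ∈ Hᗮ,
      (∑ i, (α i * Real.exp (v0 i) - p i * v0 i)) ≤ ∑ i, (α i * Real.exp (u i) - p i * u i)) :
    ∀ u ∈ Hᗮ, ∑ i, u i * (α i * Real.exp (v0 i) - p i) = 0 := by
  intro u hu
  set φ : ℝ → ℝ := fun t => ∑ i, (α i * Real.exp (v0 i + t * u i) - p i * (v0 i + t * u i)) with hφ
  have hder : HasDerivAt φ (∑ i, u i * (α i * Real.exp (v0 i) - p i)) 0 := by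
    have : HasDerivAt φ (∑ i : Fin m, (α i * (Real.exp (v0 i + 0 * u i) * u i) - p i * u i)) 0 := by
      apply HasDerivAt.fun_sum
      intro i _
      have h1 : HasDerivAt (fun t : ℝ => v0 i + t * u i) (u i) 0 :=
        (hasDerivAt_mul_const (u i)).const_add (v0 i)
      have h2 : HasDerivAt (fun t : ℝ => Real.exp (v0 i + t * u i))
          (Real.exp (v0 i + 0 * u i) * u i) 0 := (Real.hasDerivAt_exp _).comp 0 h1
      exact (h2.const_mul (α i)).sub (h1.const_mul (p i))
    convert this using 1
    apply Finset.sum_congr rfl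
    intro i _
    simp
    ring
  have hloc : IsLocalMin φ 0 := by
    apply Filter.Eventually.of_forall
    intro t
    have hmem : v0 + t • u ∈ Hᗮ := Submodule.add_mem _ hv0 (Submodule.smul_mem _ t hu)
    have := hmin (v0 + t • u) hmem
    have he : ∀ (s : ℝ), φ s = ∑ i, (α i * Real.exp ((v0 + s • u) i) - p i * ((v0 + s • u) i)) := by
      intro s
      apply Finset.sum_congr rfl
      intro i _
      simp [PiLp.add_apply, PiLp.smul_apply, smul_eq_mul]
    rw [he t, he 0]
    simpa using this
  have := hloc.hasDerivAt_eq_zero hder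
  exact this

/-- Birch's theorem: for a linear subspace `H ⊆ ℝ^m` and positive
vectors `α, p`, the relative interior of `P = (p + H) ∩ ℝ^m_{≥0}` meets the toric
pencil `{α * θ^w : θ > 0, w ∈ H^⊥}` in exactly one point. -/
theorem birch_theorem {m : ℕ} (H : Submodule ℝ (EuclideanSpace ℝ (Fin m)))
    (α p : EuclideanSpace ℝ (Fin m)) (hα : ∀ i, 0 < α i) (hp : ∀ i, 0 < p i) :
    ∃! x : EuclideanSpace ℝ (Fin m),
      (∀ i, 0 < x i) ∧ x - p ∈ H ∧
      ∃ θ : ℝ, 0 < θ ∧ ∃ w : EuclideanSpace ℝ (Fin m), w ∈ Hᗮ ∧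
        x = fun i => α i * θ ^ (w i) := by
  classical
  obtain ⟨v0, hv0, hmin⟩ := birch_exists_min H α p hα hp
  have hderiv := birch_deriv H α p v0 hv0 hmin
  set x : EuclideanSpace ℝ (Fin m) := WithLp.toLp 2 (fun i => α i * Real.exp (v0 i)) with hx
  have hxpos : ∀ i, 0 < x i := fun i => mul_pos (hα i) (Real.exp_pos _)
  have hxH : x - p ∈ H := by
    rw [← Submodule.orthogonal_orthogonal H]
    rw [Submodule.mem_orthogonal]
    intro u hu
    have := hderiv u hu
    rw [PiLp.inner_apply]
    simp only [RCLike.inner_apply, conj_trivial]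
    rw [← this]
    apply Finset.sum_congr rfl
    intro i _
    simp [hx, PiLp.sub_apply]
    ring
  -- uniqueness helper
  have huniq : ∀ y z : EuclideanSpace ℝ (Fin m),
      ((∀ i, 0 < y i) ∧ y - p ∈ H ∧
        ∃ θ : ℝ, 0 < θ ∧ ∃ w : EuclideanSpace ℝ (Fin m), w ∈ Hᗮ ∧
          y = fun i => α i * θ ^ (w i)) →
      ((∀ i, 0 < z i) ∧ z - p ∈ H ∧
        ∃ θ : ℝ, 0 < θ ∧ ∃ w : EuclideanSpace ℝ (Fin m), w ∈ Hᗮ ∧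
          z = fun i => α i * θ ^ (w i)) → y = z := by
    rintro y z ⟨hy, hyH, θ₁, hθ₁, w₁, hw₁, hyeq⟩ ⟨hz, hzH, θ₂, hθ₂, w₂, hw₂, hzeq⟩
    have hyz : y - z ∈ H := by
      have := Submodule.sub_mem H hyH hzH
      simpa using this
    set L : EuclideanSpace ℝ (Fin m) :=
      Real.log θ₁ • w₁ - Real.log θ₂ • w₂ with hL
    have hLmem : L ∈ Hᗮ :=
      Submodule.sub_mem _ (Submodule.smul_mem _ _ hw₁) (Submodule.smul_mem _ _ hw₂)
    have hLi : ∀ i, L i = Real.log (y i) - Real.log (z i) := by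
      intro i
      have hyi : y i = α i * θ₁ ^ (w₁ i) := by rw [hyeq]
      have hzi : z i = α i * θ₂ ^ (w₂ i) := by rw [hzeq]
      have hly : Real.log (y i) = Real.log (α i) + w₁ i * Real.log θ₁ := by
        rw [hyi, Real.log_mul (hα i).ne' (Real.rpow_pos_of_pos hθ₁ _).ne',
          Real.log_rpow hθ₁]
      have hlz : Real.log (z i) = Real.log (α i) + w₂ i * Real.log θ₂ := by
        rw [hzi, Real.log_mul (hα i).ne' (Real.rpow_pos_of_pos hθ₂ _).ne',
          Real.log_rpow hθ₂]
      rw [hly, hlz]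
      simp [hL, PiLp.sub_apply, PiLp.smul_apply, smul_eq_mul]
      ring
    have hinner : ⟪y - z, L⟫ = 0 := hLmem (y - z) hyz
    have hsum : ∑ i, (y i - z i) * (Real.log (y i) - Real.log (z i)) = 0 := by
      rw [← hinner, PiLp.inner_apply]
      apply Finset.sum_congr rfl
      intro i _
      simp [RCLike.inner_apply, conj_trivial, PiLp.sub_apply, hLi i]
      ring
    have hterm : ∀ i ∈ Finset.univ,
        (0:ℝ) ≤ (y i - z i) * (Real.log (y i) - Real.log (z i)) := by
      intro i _
      rcases le_total (y i) (z i) with h | h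
      · have := Real.log_le_log (hy i) h
        have h1 : y i - z i ≤ 0 := by linarith
        have h2 : Real.log (y i) - Real.log (z i) ≤ 0 := by linarith
        nlinarith
      · have := Real.log_le_log (hz i) h
        apply mul_nonneg <;> linarith
    have hzero := (Finset.sum_eq_zero_iff_of_nonneg hterm).mp hsum
    ext i
    by_contra hne
    rcases lt_or_gt_of_ne hne with h | h
    · have hlog : Real.log (y i) < Real.log (z i) := Real.log_lt_log (hy i) h
      have := hzero i (Finset.mem_univ i)
      nlinarith
    · have hlog : Real.log (z i) < Real.log (y i) := Real.log_lt_log (hz i) h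
      have := hzero i (Finset.mem_univ i)
      nlinarith
  refine ⟨x, ⟨hxpos, hxH, Real.exp 1, Real.exp_pos 1, v0, hv0, ?_⟩, ?_⟩
  · funext i
    rw [hx]
    simp [Real.exp_one_rpow]
  · intro y hy
    exact huniq y x hy ⟨hxpos, hxH, Real.exp 1, Real.exp_pos 1, v0, hv0, by
      funext i; rw [hx]; simp [Real.exp_one_rpow]⟩
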